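/- arXiv:1109.4335 — 2 statements merged into one kernel-verified Lean document; each statement's English description precedes it below -/
import Mathlib

section
/- Let the initial valuation satisfy v(t_x) = v(¬t_x) = 0 for all x ∈ I, with arbitrary values v(p_{xy}) ∈ [0,1]. Then the upper revised valuation v* equals the first iterate Tv and is given by: v*(t_x) = min over y ≠ x of v(p_{xy}); v*(¬t_x) = 0; and v*(p_{xy}) = v(p_{xy}) for all distinct x, y. Consequently the most prominent option is the x ∈ I maximizing min over y ≠ x of v(p_{xy}) (the maximin winner). -/
/-- A valuation for prominence doctrines: degrees of belief for the literals
`t_x` ("x is prominent"), `¬t_x`, and `p_{xy}` ("x is preferable to y", for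
distinct `x, y`), under the identification `¬p_{xy} = p_{yx}`. -/
structure PVal (I : Type*) where
  t : I → ℝ
  nt : I → ℝ
  p : I → I → ℝ

/-- Max over a (possibly empty) index set of reals: the empty max is `0`
(note `Real.sSup_empty = 0`). -/
noncomputable def sup0 (S : Set ℝ) : ℝ := sSup S

open Classical in
/-- Min over a (possibly empty) index set of reals: the empty min is `1`. -/
noncomputable def inf1 (S : Set ℝ) : ℝ := if S.Nonempty then sInf S else 1

/-- The one-step revision operator associated with the doctrine consisting only
of the clauses `t_x ∨ ⋁_{y ≠ x} p_{yx}`. -/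
noncomputable def Tmm {I : Type*} (v : PVal I) : PVal I where
  t := fun x => max (v.t x) (inf1 {b : ℝ | ∃ y, y ≠ x ∧ b = v.p x y})
  nt := fun x => v.nt x
  p := fun x y => max (v.p x y)
    (min (v.t x) (inf1 {b : ℝ | ∃ z, z ≠ x ∧ z ≠ y ∧ b = v.p z x}))

lemma inf1_nonneg (S : Set ℝ) (hS : S.Nonempty) (h : ∀ b ∈ S, 0 ≤ b) : 0 ≤ inf1 S := by
  rw [inf1, if_pos hS]; exact le_csInf hS h

lemma inf1_le {S : Set ℝ} (h : ∀ b ∈ S, 0 ≤ b) {b : ℝ} (hb : b ∈ S) : inf1 S ≤ b := by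
  rw [inf1, if_pos ⟨b, hb⟩]; exact csInf_le ⟨0, h⟩ hb

lemma PVal_ext {I : Type*} {a b : PVal I} (h1 : a.t = b.t) (h2 : a.nt = b.nt)
    (h3 : a.p = b.p) : a = b := by cases a; cases b; simp_all

/-- The maximin rule: with zero initial belief in the `t_x` and `¬t_x`, the
upper revised valuation equals the first iterate `Tv`, is given by
`v*(t_x) = min_{y ≠ x} v(p_{xy})`, `v*(¬t_x) = 0`, `v*(p_{xy}) = v(p_{xy})`;
consequently the most prominent options (those whose prominence gets a highest
acceptability) are exactly the maximin winners. -/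
theorem stmt10 {I : Type*} [Fintype I] [DecidableEq I]
    (hcard : 2 ≤ Fintype.card I)
    (v : PVal I)
    (hbox : ∀ x y : I, x ≠ y → v.p x y ∈ Set.Icc (0:ℝ) 1)
    (ht : ∀ x, v.t x = 0) (hnt : ∀ x, v.nt x = 0)
    (vstar : PVal I) (hstar : ∃ N : ℕ, ∀ n ≥ N, Tmm^[n] v = vstar) :
    -- v* equals the first iterate Tv
    (∀ x, vstar.t x = (Tmm v).t x) ∧
    (∀ x, vstar.nt x = (Tmm v).nt x) ∧
    (∀ x y : I, x ≠ y → vstar.p x y = (Tmm v).p x y) ∧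
    -- explicit formulas
    (∀ x, vstar.t x = inf1 {b : ℝ | ∃ y, y ≠ x ∧ b = v.p x y}) ∧
    (∀ x, vstar.nt x = 0) ∧
    (∀ x y : I, x ≠ y → vstar.p x y = v.p x y) ∧
    -- the most prominent option is the maximin winner
    (∀ x : I,
      (∀ y : I, vstar.t y - vstar.nt y ≤ vstar.t x - vstar.nt x) ↔
      (∀ y : I, inf1 {b : ℝ | ∃ z, z ≠ y ∧ b = v.p y z} ≤
        inf1 {b : ℝ | ∃ z, z ≠ x ∧ b = v.p x z})) := by
  set w := Tmm v with hw
  set u := Tmm w with hu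
  -- basic facts about the sets S x
  set S : I → Set ℝ := fun x => {b : ℝ | ∃ y, y ≠ x ∧ b = v.p x y} with hS
  have hSne : ∀ x, (S x).Nonempty := by
    intro x
    obtain ⟨y, hy⟩ := Fintype.exists_ne_of_one_lt_card (by omega) x
    exact ⟨v.p x y, y, hy, rfl⟩
  have hS0 : ∀ x, ∀ b ∈ S x, 0 ≤ b := by
    rintro x b ⟨y, hy, rfl⟩
    exact (hbox x y hy.symm).1
  have hSin : ∀ x y, y ≠ x → v.p x y ∈ S x := fun x y hy => ⟨y, hy, rfl⟩
  -- facts about w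
  have hw_p : ∀ x y : I, x ≠ y → w.p x y = v.p x y := by
    intro x y hxy
    show max (v.p x y) _ = v.p x y
    refine max_eq_left ?_
    calc min (v.t x) _ ≤ v.t x := min_le_left _ _
      _ = 0 := ht x
      _ ≤ v.p x y := (hbox x y hxy).1
  have hw_t : ∀ x, w.t x = inf1 (S x) := by
    intro x
    show max (v.t x) (inf1 (S x)) = inf1 (S x)
    rw [ht x]
    exact max_eq_right (inf1_nonneg _ (hSne x) (hS0 x))
  have hw_nt : ∀ x, w.nt x = 0 := fun x => hnt x
  -- sets built from w agree with those built from v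
  have hset1 : ∀ x, {b : ℝ | ∃ y, y ≠ x ∧ b = w.p x y} = S x := by
    intro x; ext b
    constructor
    · rintro ⟨y, hy, rfl⟩; exact ⟨y, hy, hw_p x y hy.symm⟩
    · rintro ⟨y, hy, rfl⟩; exact ⟨y, hy, (hw_p x y hy.symm).symm⟩
  have hset2 : ∀ x y, {b : ℝ | ∃ z, z ≠ x ∧ z ≠ y ∧ b = w.p z x}
      = {b : ℝ | ∃ z, z ≠ x ∧ z ≠ y ∧ b = v.p z x} := by
    intro x y; ext b
    constructor
    · rintro ⟨z, hz, hz', rfl⟩; exact ⟨z, hz, hz', hw_p z x hz⟩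
    · rintro ⟨z, hz, hz', rfl⟩; exact ⟨z, hz, hz', (hw_p z x hz).symm⟩
  -- facts about u
  have hu_t : ∀ x, u.t x = inf1 (S x) := by
    intro x
    show max (w.t x) (inf1 {b : ℝ | ∃ y, y ≠ x ∧ b = w.p x y}) = inf1 (S x)
    rw [hset1, hw_t, max_self]
  have hu_nt : ∀ x, u.nt x = 0 := fun x => hw_nt x
  have hu_p : ∀ x y : I, x ≠ y → u.p x y = v.p x y := by
    intro x y hxy
    show max (w.p x y) _ = v.p x y
    rw [hw_p x y hxy]
    refine max_eq_left ?_
    calc min (w.t x) _ ≤ w.t x := min_le_left _ _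
      _ = inf1 (S x) := hw_t x
      _ ≤ v.p x y := inf1_le (hS0 x) (hSin x y hxy.symm)
  have hset1u : ∀ x, {b : ℝ | ∃ y, y ≠ x ∧ b = u.p x y} = S x := by
    intro x; ext b
    constructor
    · rintro ⟨y, hy, rfl⟩; exact ⟨y, hy, hu_p x y hy.symm⟩
    · rintro ⟨y, hy, rfl⟩; exact ⟨y, hy, (hu_p x y hy.symm).symm⟩
  have hset2u : ∀ x y, {b : ℝ | ∃ z, z ≠ x ∧ z ≠ y ∧ b = u.p z x}
      = {b : ℝ | ∃ z, z ≠ x ∧ z ≠ y ∧ b = v.p z x} := by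
    intro x y; ext b
    constructor
    · rintro ⟨z, hz, hz', rfl⟩; exact ⟨z, hz, hz', hu_p z x hz⟩
    · rintro ⟨z, hz, hz', rfl⟩; exact ⟨z, hz, hz', (hu_p z x hz).symm⟩
  -- u is a fixed point of Tmm
  have hfix : Tmm u = u := by
    refine PVal_ext (funext fun x => ?_) rfl (funext fun x => funext fun y => ?_)
    · show max (u.t x) (inf1 {b : ℝ | ∃ y, y ≠ x ∧ b = u.p x y}) = u.t x
      rw [hset1u, hu_t, max_self]
    · by_cases hxy : x = y
      · subst hxy
        show max (u.p x x) (min (u.t x) (inf1 {b : ℝ | ∃ z, z ≠ x ∧ z ≠ x ∧ b = u.p z x}))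
          = u.p x x
        rw [hset2u]
        have hupxx : u.p x x = max (w.p x x)
            (min (w.t x) (inf1 {b : ℝ | ∃ z, z ≠ x ∧ z ≠ x ∧ b = v.p z x})) := by
          show max (w.p x x) (min (w.t x) (inf1 {b : ℝ | ∃ z, z ≠ x ∧ z ≠ x ∧ b = w.p z x})) = _
          rw [hset2]
        rw [hupxx, hu_t, hw_t, max_assoc, max_self]
      · show max (u.p x y) (min (u.t x) _) = u.p x y
        refine max_eq_left ?_
        calc min (u.t x) _ ≤ u.t x := min_le_left _ _
          _ = inf1 (S x) := hu_t x
          _ ≤ v.p x y := inf1_le (hS0 x) (hSin x y (Ne.symm hxy))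
          _ = u.p x y := (hu_p x y hxy).symm
  -- vstar = u
  obtain ⟨N, hN⟩ := hstar
  have hvu : vstar = u := by
    have h2 : Tmm^[2] v = u := rfl
    have := hN (N + 2) (by omega)
    rw [Function.iterate_add_apply, h2, Function.iterate_fixed hfix] at this
    exact this.symm
  subst hvu
  refine ⟨fun x => ?_, fun x => ?_, fun x y hxy => ?_, hu_t, hu_nt, hu_p, fun x => ?_⟩
  · rw [hu_t, ← hw_t]
  · rw [hu_nt, ← hw_nt]
  · rw [hu_p x y hxy, ← hw_p x y hxy]
  · constructor
    · intro h y
      have := h y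
      rw [hu_t, hu_t, hu_nt, hu_nt, sub_zero, sub_zero] at this
      exact this
    · intro h y
      rw [hu_t, hu_t, hu_nt, hu_nt, sub_zero, sub_zero]
      exact h y
end

section
/- Let the initial valuation satisfy v(t_x) = v(¬t_x) = 0 for all x ∈ I, with arbitrary values v(p_{xy}) ∈ [0,1]. Then the upper revised valuation v* equals the first iterate Tv and is given by: v*(t_x) = min over y ≠ x of v(p_{xy}); v*(¬t_x) = min over y ≠ x of v(p_{yx}); and v*(p_{xy}) = v(p_{xy}) for all distinct x, y. -/
/-- The one-step revision operator associated with the symmetric prominence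
doctrine, whose clauses are `t_x ∨ ⋁_{y ≠ x} p_{yx}` and `¬t_x ∨ ⋁_{y ≠ x} p_{xy}`. -/
noncomputable def Tsym {I : Type*} (v : PVal I) : PVal I where
  t := fun x => max (v.t x) (inf1 {b : ℝ | ∃ y, y ≠ x ∧ b = v.p x y})
  nt := fun x => max (v.nt x) (inf1 {b : ℝ | ∃ y, y ≠ x ∧ b = v.p y x})
  p := fun x y => max (v.p x y)
    (max (min (v.t x) (inf1 {b : ℝ | ∃ z, z ≠ x ∧ z ≠ y ∧ b = v.p z x}))
         (min (v.nt y) (inf1 {b : ℝ | ∃ z, z ≠ x ∧ z ≠ y ∧ b = v.p y z})))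

lemma inf1_le' {S : Set ℝ} (hbdd : BddBelow S) {a : ℝ} (ha : a ∈ S) : inf1 S ≤ a := by
  rw [inf1, if_pos ⟨a, ha⟩]; exact csInf_le hbdd ha

lemma le_inf1' {S : Set ℝ} {c : ℝ} (hc : c ≤ 1) (h : ∀ a ∈ S, c ≤ a) : c ≤ inf1 S := by
  unfold inf1; split
  · exact le_csInf ‹_› h
  · exact hc

lemma inf1_congr {S T : Set ℝ} (h : S = T) : inf1 S = inf1 T := by rw [h]

/-- Symmetric prominence: with zero initial belief in the `t_x` and `¬t_x`, the
upper revised valuation equals the first iterate `Tv` and is given by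
`v*(t_x) = min_{y ≠ x} v(p_{xy})`, `v*(¬t_x) = min_{y ≠ x} v(p_{yx})`,
`v*(p_{xy}) = v(p_{xy})`. -/
theorem stmt11 {I : Type*} [Fintype I] [DecidableEq I]
    (hcard : 2 ≤ Fintype.card I)
    (v : PVal I)
    (hbox : ∀ x y : I, x ≠ y → v.p x y ∈ Set.Icc (0:ℝ) 1)
    (ht : ∀ x, v.t x = 0) (hnt : ∀ x, v.nt x = 0)
    (vstar : PVal I) (hstar : ∃ N : ℕ, ∀ n ≥ N, Tsym^[n] v = vstar) :
    -- v* equals the first iterate Tv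
    (∀ x, vstar.t x = (Tsym v).t x) ∧
    (∀ x, vstar.nt x = (Tsym v).nt x) ∧
    (∀ x y : I, x ≠ y → vstar.p x y = (Tsym v).p x y) ∧
    -- explicit formulas
    (∀ x, vstar.t x = inf1 {b : ℝ | ∃ y, y ≠ x ∧ b = v.p x y}) ∧
    (∀ x, vstar.nt x = inf1 {b : ℝ | ∃ y, y ≠ x ∧ b = v.p y x}) ∧
    (∀ x y : I, x ≠ y → vstar.p x y = v.p x y) := by
  set A : I → ℝ := fun x => inf1 {b : ℝ | ∃ y, y ≠ x ∧ b = v.p x y} with hA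
  set B : I → ℝ := fun x => inf1 {b : ℝ | ∃ y, y ≠ x ∧ b = v.p y x} with hB
  -- basic bounds
  have hbddA : ∀ x : I, BddBelow {b : ℝ | ∃ y, y ≠ x ∧ b = v.p x y} := by
    intro x
    exact ⟨0, by rintro b ⟨y, hy, rfl⟩; exact (hbox x y (Ne.symm hy)).1⟩
  have hbddB : ∀ x : I, BddBelow {b : ℝ | ∃ y, y ≠ x ∧ b = v.p y x} := by
    intro x
    exact ⟨0, by rintro b ⟨y, hy, rfl⟩; exact (hbox y x hy).1⟩
  have hA0 : ∀ x, 0 ≤ A x := by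
    intro x
    exact le_inf1' zero_le_one (by rintro b ⟨y, hy, rfl⟩; exact (hbox x y (Ne.symm hy)).1)
  have hB0 : ∀ x, 0 ≤ B x := by
    intro x
    exact le_inf1' zero_le_one (by rintro b ⟨y, hy, rfl⟩; exact (hbox y x hy).1)
  have hAle : ∀ x y : I, y ≠ x → A x ≤ v.p x y := fun x y hy =>
    inf1_le' (hbddA x) ⟨y, hy, rfl⟩
  have hBle : ∀ x y : I, y ≠ x → B x ≤ v.p y x := fun x y hy =>
    inf1_le' (hbddB x) ⟨y, hy, rfl⟩
  -- the invariant
  set P : PVal I → Prop := fun u =>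
    (∀ x, u.t x = A x) ∧ (∀ x, u.nt x = B x) ∧ (∀ x y : I, x ≠ y → u.p x y = v.p x y)
    with hP
  have base : P (Tsym v) := by
    refine ⟨fun x => ?_, fun x => ?_, fun x y hxy => ?_⟩
    · show max (v.t x) (A x) = A x
      rw [ht, max_eq_right (hA0 x)]
    · show max (v.nt x) (B x) = B x
      rw [hnt, max_eq_right (hB0 x)]
    · show max (v.p x y) _ = v.p x y
      rw [ht, hnt]
      have h1 : min (0:ℝ) (inf1 {b : ℝ | ∃ z, z ≠ x ∧ z ≠ y ∧ b = v.p z x}) ≤ v.p x y :=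
        le_trans (min_le_left _ _) (hbox x y hxy).1
      have h2 : min (0:ℝ) (inf1 {b : ℝ | ∃ z, z ≠ x ∧ z ≠ y ∧ b = v.p y z}) ≤ v.p x y :=
        le_trans (min_le_left _ _) (hbox x y hxy).1
      exact max_eq_left (max_le h1 h2)
  have step : ∀ u : PVal I, P u → P (Tsym u) := by
    rintro u ⟨hut, hunt, hup⟩
    have hSt : ∀ x : I, {b : ℝ | ∃ y, y ≠ x ∧ b = u.p x y} = {b : ℝ | ∃ y, y ≠ x ∧ b = v.p x y} := by
      intro x; ext b
      constructor <;> rintro ⟨y, hy, rfl⟩ <;> exact ⟨y, hy, by rw [hup x y (Ne.symm hy)]⟩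
    have hSnt : ∀ x : I, {b : ℝ | ∃ y, y ≠ x ∧ b = u.p y x} = {b : ℝ | ∃ y, y ≠ x ∧ b = v.p y x} := by
      intro x; ext b
      constructor <;> rintro ⟨y, hy, rfl⟩ <;> exact ⟨y, hy, by rw [hup y x hy]⟩
    refine ⟨fun x => ?_, fun x => ?_, fun x y hxy => ?_⟩
    · show max (u.t x) (inf1 _) = A x
      rw [hut x, inf1_congr (hSt x)]; exact max_self (A x)
    · show max (u.nt x) (inf1 _) = B x
      rw [hunt x, inf1_congr (hSnt x)]; exact max_self (B x)
    · show max (u.p x y) _ = v.p x y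
      rw [hup x y hxy]
      have h1 : min (u.t x) (inf1 {b : ℝ | ∃ z, z ≠ x ∧ z ≠ y ∧ b = u.p z x}) ≤ v.p x y := by
        refine le_trans (min_le_left _ _) ?_
        rw [hut x]
        exact hAle x y (Ne.symm hxy)
      have h2 : min (u.nt y) (inf1 {b : ℝ | ∃ z, z ≠ x ∧ z ≠ y ∧ b = u.p y z}) ≤ v.p x y := by
        refine le_trans (min_le_left _ _) ?_
        rw [hunt y]
        exact hBle y x hxy
      exact max_eq_left (max_le h1 h2)
  have iter : ∀ n : ℕ, P (Tsym^[n + 1] v) := by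
    intro n
    induction n with
    | zero => simpa using base
    | succ n ih =>
      rw [Function.iterate_succ_apply']
      exact step _ ih
  obtain ⟨N, hN⟩ := hstar
  have hvs : Tsym^[N + 1] v = vstar := hN (N + 1) (by omega)
  have hPstar : P vstar := hvs ▸ iter N
  obtain ⟨h1, h2, h3⟩ := hPstar
  obtain ⟨b1, b2, b3⟩ := base
  exact ⟨fun x => by rw [h1 x, b1 x],
         fun x => by rw [h2 x, b2 x],
         fun x y hxy => by rw [h3 x y hxy, b3 x y hxy],
         h1, h2, h3⟩
end
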